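/- Define, for u,v ∈ ℂ with uv ≠ 1, uv ≠ −1 and (uv)⁵ ≠ 1, E(u,v) = [(1−u²v)³(1−uv²)³ − (uv)⁴(1−u)³(1−v)³]/[(1−uv)(1−(uv)²)] − ((uv)²/2)·[(1−u)³(1−v)³/(1−uv) − (1+u)³(1+v)³/(1+uv)] + 64·(uv)⁵·(1+uv+(uv)²)(1+(uv)²)·((uv−1)/((uv)⁵−1))². Then for all u, v ∈ ℂ with u ≠ 0, v ≠ 0, uv ≠ 1, uv ≠ −1 and (uv)⁵ ≠ 1, one has E(u,v) = (uv)⁶ · E(u⁻¹, v⁻¹). -/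

import Mathlib

set_option maxHeartbeats 4000000


/-- The stringy E-function of the moduli space N (Theorem 1.1). -/
noncomputable def Est (u v : ℂ) : ℂ :=
  ((1 - u ^ 2 * v) ^ 3 * (1 - u * v ^ 2) ^ 3
      - (u * v) ^ 4 * (1 - u) ^ 3 * (1 - v) ^ 3)
    / ((1 - u * v) * (1 - (u * v) ^ 2))
  - (u * v) ^ 2 / 2 *
      ((1 - u) ^ 3 * (1 - v) ^ 3 / (1 - u * v)
        - (1 + u) ^ 3 * (1 + v) ^ 3 / (1 + u * v))
  + 64 * (u * v) ^ 5 * (1 + u * v + (u * v) ^ 2) * (1 + (u * v) ^ 2)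
      * ((u * v - 1) / ((u * v) ^ 5 - 1)) ^ 2

lemma aux_t1 (u v : ℂ) (hu : u ≠ 0) (hv : v ≠ 0)
    (hA : 1 - 1/(u * v) ≠ 0) (hC : 1 - (1/(u * v)) ^ 2 ≠ 0)
    (ha : 1 - u * v ≠ 0) (hc : 1 - (u * v) ^ 2 ≠ 0) :
    ((1 - 1/(u ^ 2 * v)) ^ 3 * (1 - 1/(u * v ^ 2)) ^ 3
      - (1/(u * v)) ^ 4 * (1 - 1/u) ^ 3 * (1 - 1/v) ^ 3)
    / ((1 - 1/(u * v)) * (1 - (1/(u * v)) ^ 2))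
      = ((1 - u ^ 2 * v) ^ 3 * (1 - u * v ^ 2) ^ 3
      - (u * v) ^ 2 * (1 - u) ^ 3 * (1 - v) ^ 3)
    / ((u * v) ^ 6 * ((1 - u * v) * (1 - (u * v) ^ 2))) := by
  rw [div_eq_div_iff (mul_ne_zero hA hC)
    (mul_ne_zero (pow_ne_zero 6 (mul_ne_zero hu hv)) (mul_ne_zero ha hc))]
  have h1 : u ^ 16 * u⁻¹ ^ 16 = 1 := by rw [← mul_pow, mul_inv_cancel₀ hu, one_pow]
  have h2 : v ^ 16 * v⁻¹ ^ 16 = 1 := by rw [← mul_pow, mul_inv_cancel₀ hv, one_pow]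
  have hcan : u ^ 16 * v ^ 16 * u⁻¹ ^ 16 * v⁻¹ ^ 16 = 1 := by
    linear_combination v ^ 16 * v⁻¹ ^ 16 * h1 + h2
  field_simp
  ring

lemma aux_e1 (u v : ℂ) (hu : u ≠ 0) (hv : v ≠ 0)
    (hA : 1 - 1/(u * v) ≠ 0) (ha : 1 - u * v ≠ 0) :
    (1 - 1/u) ^ 3 * (1 - 1/v) ^ 3 / (1 - 1/(u * v))
      = -((1 - u) ^ 3 * (1 - v) ^ 3) / ((u * v) ^ 2 * (1 - u * v)) := by
  rw [div_eq_div_iff hA (mul_ne_zero (pow_ne_zero 2 (mul_ne_zero hu hv)) ha)]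
  field_simp
  try ring

lemma aux_e2 (u v : ℂ) (hu : u ≠ 0) (hv : v ≠ 0)
    (hB : 1 + 1/(u * v) ≠ 0) (hb : 1 + u * v ≠ 0) :
    (1 + 1/u) ^ 3 * (1 + 1/v) ^ 3 / (1 + 1/(u * v))
      = (1 + u) ^ 3 * (1 + v) ^ 3 / ((u * v) ^ 2 * (1 + u * v)) := by
  rw [div_eq_div_iff hB (mul_ne_zero (pow_ne_zero 2 (mul_ne_zero hu hv)) hb)]
  field_simp
  try ring

lemma aux_e3 (u v : ℂ) (hu : u ≠ 0) (hv : v ≠ 0)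
    (hD : (1/(u * v)) ^ 5 - 1 ≠ 0) (hd : (u * v) ^ 5 - 1 ≠ 0) :
    (1/(u * v) - 1) / ((1/(u * v)) ^ 5 - 1)
      = (u * v) ^ 4 * (u * v - 1) / ((u * v) ^ 5 - 1) := by
  rw [div_eq_div_iff hD hd]
  field_simp
  try ring

/-- Poincaré duality for the stringy E-function:
E(u,v) = (uv)⁶ · E(u⁻¹,v⁻¹). -/
theorem Est_poincare_duality (u v : ℂ) (hu : u ≠ 0) (hv : v ≠ 0)
    (h1 : u * v ≠ 1) (h2 : u * v ≠ -1) (h5 : (u * v) ^ 5 ≠ 1) :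
    Est u v = (u * v) ^ 6 * Est u⁻¹ v⁻¹ := by
  have ha : 1 - u * v ≠ 0 := sub_ne_zero.mpr (fun h => h1 h.symm)
  have hb : 1 + u * v ≠ 0 := fun h => h2 (by linear_combination h)
  have hc : 1 - (u * v) ^ 2 ≠ 0 := by
    intro h
    have : (1 - u * v) * (1 + u * v) = 0 := by linear_combination h
    rcases mul_eq_zero.mp this with h' | h'
    exacts [ha h', hb h']
  have hd : (u * v) ^ 5 - 1 ≠ 0 := sub_ne_zero.mpr h5
  have huv : u * v ≠ 0 := mul_ne_zero hu hv
  have hA : 1 - 1 / (u * v) ≠ 0 := by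
    intro h
    apply ha
    field_simp at h
    linear_combination -h
  have hB : 1 + 1 / (u * v) ≠ 0 := by
    intro h
    apply hb
    field_simp at h
    linear_combination h
  have hC : 1 - (1 / (u * v)) ^ 2 ≠ 0 := by
    intro h
    have : (1 - 1 / (u * v)) * (1 + 1 / (u * v)) = 0 := by linear_combination h
    rcases mul_eq_zero.mp this with h' | h'
    exacts [hA h', hB h']
  have hD : (1 / (u * v)) ^ 5 - 1 ≠ 0 := by
    intro h
    apply hd
    field_simp at h
    linear_combination -h
  have e0 : u⁻¹ * v⁻¹ = 1 / (u * v) := by rw [← mul_inv, one_div]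
  have eA : u⁻¹ ^ 2 * v⁻¹ = 1 / (u ^ 2 * v) := by rw [inv_pow, ← mul_inv, one_div]
  have eB : u⁻¹ * v⁻¹ ^ 2 = 1 / (u * v ^ 2) := by rw [inv_pow, ← mul_inv, one_div]
  have eC : u⁻¹ = 1 / u := (one_div u).symm
  have eD : v⁻¹ = 1 / v := (one_div v).symm
  unfold Est
  rw [e0, eA, eB, eC, eD]
  rw [aux_t1 u v hu hv hA hC ha hc, aux_e1 u v hu hv hA ha,
    aux_e2 u v hu hv hB hb, aux_e3 u v hu hv hD hd]
  clear hA hB hC hD h1 h2 h5 e0 eA eB eC eD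
  field_simp
  have hc' : 1 - u ^ 2 * v ^ 2 ≠ 0 := by rwa [mul_pow] at hc
  have hd' : u ^ 5 * v ^ 5 - 1 ≠ 0 := by rwa [mul_pow] at hd
  field_simp
  ring
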